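/- For all natural numbers j and k, the polynomial function (X,Y) ↦ tr(X^j · Y^k) on M_n(ℂ) × M_n(ℂ) belongs to the ℂ-subalgebra of polynomial functions on M_n(ℂ) × M_n(ℂ) generated by the finite set {(X,Y) ↦ tr(X^a · Y^b) : 0 ≤ a ≤ n, 0 ≤ b ≤ n}. -/

import Mathlib

open MvPolynomial Matrix

/-- Polynomial functions on `M_n(ℂ) × M_n(ℂ)`, represented as polynomials in the
entries of the two matrices. -/
abbrev PolyFun (n : ℕ) := MvPolynomial ((Fin n × Fin n) ⊕ (Fin n × Fin n)) ℂ

/-- The matrix of coordinate functions `X_{jk}`. -/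
noncomputable def Xmat (n : ℕ) : Matrix (Fin n) (Fin n) (PolyFun n) :=
  fun i j => MvPolynomial.X (Sum.inl (i, j))

/-- The matrix of coordinate functions `Y_{jk}`. -/
noncomputable def Ymat (n : ℕ) : Matrix (Fin n) (Fin n) (PolyFun n) :=
  fun i j => MvPolynomial.X (Sum.inr (i, j))

/-- Traceless part `A = X - (tr X / n) I_n`. -/
noncomputable def Amat (n : ℕ) : Matrix (Fin n) (Fin n) (PolyFun n) :=
  Xmat n - (MvPolynomial.C ((n : ℂ)⁻¹) * Matrix.trace (Xmat n)) • (1 : Matrix (Fin n) (Fin n) (PolyFun n))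

/-- Traceless part `B = Y - (tr Y / n) I_n`. -/
noncomputable def Bmat (n : ℕ) : Matrix (Fin n) (Fin n) (PolyFun n) :=
  Ymat n - (MvPolynomial.C ((n : ℂ)⁻¹) * Matrix.trace (Ymat n)) • (1 : Matrix (Fin n) (Fin n) (PolyFun n))

/-- The polynomial function `(X,Y) ↦ tr (A^p B^q)`. -/
noncomputable def trAB (n p q : ℕ) : PolyFun n :=
  Matrix.trace (Amat n ^ p * Bmat n ^ q)

/-- The polynomial function `(X,Y) ↦ tr (X^a Y^b)`. -/
noncomputable def trXY (n a b : ℕ) : PolyFun n :=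
  Matrix.trace (Xmat n ^ a * Ymat n ^ b)

/-- The Poisson bracket
`{F,G} = Σ_{j,k} ∂F/∂X_{jk} ∂G/∂Y_{kj} − ∂F/∂Y_{jk} ∂G/∂X_{kj}`. -/
noncomputable def pbracket {n : ℕ} (F G : PolyFun n) : PolyFun n :=
  ∑ j : Fin n, ∑ k : Fin n,
    (MvPolynomial.pderiv (Sum.inl (j, k)) F * MvPolynomial.pderiv (Sum.inr (k, j)) G
      - MvPolynomial.pderiv (Sum.inr (j, k)) F * MvPolynomial.pderiv (Sum.inl (k, j)) G)

/-- Evaluation of a polynomial function at a pair of matrices. -/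
noncomputable def evalP {n : ℕ} (X Y : Matrix (Fin n) (Fin n) ℂ) (F : PolyFun n) : ℂ :=
  MvPolynomial.eval (Sum.elim (fun p => X p.1 p.2) (fun p => Y p.1 p.2)) F

/-- The Calogero–Moser variety `Ĉ_n = {(X,Y) : rank([X,Y] − i I_n) = 1}`. -/
def Chat (n : ℕ) : Set (Matrix (Fin n) (Fin n) ℂ × Matrix (Fin n) (Fin n) ℂ) :=
  {P | ((P.1 * P.2 - P.2 * P.1) - Complex.I • (1 : Matrix (Fin n) (Fin n) ℂ)).rank = 1}

/-- The traceless Calogero–Moser variety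
`Ŝ_n = {(X,Y) : tr X = tr Y = 0, rank([X,Y] − i I_n) = 1}`. -/
def Shat (n : ℕ) : Set (Matrix (Fin n) (Fin n) ℂ × Matrix (Fin n) (Fin n) ℂ) :=
  {P | Matrix.trace P.1 = 0 ∧ Matrix.trace P.2 = 0 ∧
    ((P.1 * P.2 - P.2 * P.1) - Complex.I • (1 : Matrix (Fin n) (Fin n) ℂ)).rank = 1}

/-- The set `ℱ = {tr A², tr B², tr A³, (tr AB)²}`. -/
noncomputable def calF (n : ℕ) : Set (PolyFun n) :=
  {trAB n 2 0, trAB n 0 2, trAB n 3 0, (trAB n 1 1) ^ 2}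

/-- The smallest ℂ-linear subspace of the polynomial functions containing `S`
and closed under the Poisson bracket. -/
inductive LieGen (n : ℕ) (S : Set (PolyFun n)) : PolyFun n → Prop
  | base {f : PolyFun n} : f ∈ S → LieGen n S f
  | zero : LieGen n S 0
  | add {f g : PolyFun n} : LieGen n S f → LieGen n S g → LieGen n S (f + g)
  | smul (c : ℂ) {f : PolyFun n} : LieGen n S f → LieGen n S (c • f)
  | bracket {f g : PolyFun n} : LieGen n S f → LieGen n S g → LieGen n S (pbracket f g)

section CMAux

section Good
variable {R : Type*} [CommRing R] {k : ℕ}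

lemma good_mul {A B : Matrix (Fin (k+1)) (Fin (k+1)) R}
    (hA : ∀ i, i ≠ 0 → A i 0 = 0) (hB : ∀ i, i ≠ 0 → B i 0 = 0) :
    (∀ i, i ≠ 0 → (A * B) i 0 = 0) ∧ (A * B) 0 0 = A 0 0 * B 0 0 ∧
      (A * B).submatrix Fin.succ Fin.succ =
        A.submatrix Fin.succ Fin.succ * B.submatrix Fin.succ Fin.succ := by
  have hmul : ∀ i j, (A * B) i j = ∑ t, A i t * B t j := fun i j => rfl
  refine ⟨fun i hi => ?_, ?_, ?_⟩
  · rw [hmul, Fin.sum_univ_succ]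
    rw [hA i hi]
    simp only [zero_mul, zero_add]
    exact Finset.sum_eq_zero fun t _ => by rw [hB _ (Fin.succ_ne_zero t), mul_zero]
  · rw [hmul, Fin.sum_univ_succ]
    have : ∀ t : Fin k, A 0 t.succ * B t.succ 0 = 0 := fun t => by
      rw [hB _ (Fin.succ_ne_zero t), mul_zero]
    simp [this]
  · ext i j
    simp only [Matrix.submatrix_apply, Matrix.mul_apply, Fin.sum_univ_succ]
    rw [hA _ (Fin.succ_ne_zero i), zero_mul, zero_add]

lemma good_pow {N : Matrix (Fin (k+1)) (Fin (k+1)) R}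
    (hN : ∀ i, i ≠ 0 → N i 0 = 0) (m : ℕ) :
    (∀ i, i ≠ 0 → (N ^ m) i 0 = 0) ∧ (N ^ m) 0 0 = (N 0 0) ^ m ∧
      (N ^ m).submatrix Fin.succ Fin.succ = (N.submatrix Fin.succ Fin.succ) ^ m := by
  induction m with
  | zero =>
      refine ⟨fun i hi => ?_, ?_, ?_⟩
      · simp [Matrix.one_apply, hi]
      · simp
      · ext i j; simp [Matrix.one_apply, Fin.succ_inj]
  | succ m ih =>
      obtain ⟨h1, h2, h3⟩ := ih
      obtain ⟨g1, g2, g3⟩ := good_mul h1 hN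
      rw [pow_succ]
      exact ⟨g1, by rw [g2, h2, pow_succ], by rw [g3, h3, pow_succ]⟩

lemma good_trace (A : Matrix (Fin (k+1)) (Fin (k+1)) R) :
    A.trace = A 0 0 + (A.submatrix Fin.succ Fin.succ).trace := by
  simp [Matrix.trace, Matrix.diag, Fin.sum_univ_succ]

lemma good_det {A : Matrix (Fin (k+1)) (Fin (k+1)) R}
    (hA : ∀ i, i ≠ 0 → A i 0 = 0) :
    A.det = A 0 0 * (A.submatrix Fin.succ Fin.succ).det := by
  rw [Matrix.det_succ_column_zero, Fin.sum_univ_succ]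
  simp only [Fin.val_zero, pow_zero, one_mul, Fin.succAbove_zero]
  rw [Finset.sum_eq_zero fun t _ => by rw [hA _ (Fin.succ_ne_zero t)]; ring]
  rw [add_zero]

lemma good_charmatrix {N : Matrix (Fin (k+1)) (Fin (k+1)) R}
    (hN : ∀ i, i ≠ 0 → N i 0 = 0) :
    (∀ i, i ≠ 0 → charmatrix N i 0 = 0) ∧
      (charmatrix N).submatrix Fin.succ Fin.succ =
        charmatrix (N.submatrix Fin.succ Fin.succ) := by
  constructor
  · intro i hi
    rw [charmatrix_apply_ne _ _ _ hi, hN i hi, map_zero, neg_zero]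
  · ext i j
    by_cases h : i = j
    · subst h; simp [charmatrix_apply_eq]
    · rw [Matrix.submatrix_apply,
        charmatrix_apply_ne _ _ _ (by simpa [Fin.succ_inj] using h),
        charmatrix_apply_ne _ _ _ h]
      rfl

lemma good_charpoly {N : Matrix (Fin (k+1)) (Fin (k+1)) R}
    (hN : ∀ i, i ≠ 0 → N i 0 = 0) :
    N.charpoly = (Polynomial.X - Polynomial.C (N 0 0)) * (N.submatrix Fin.succ Fin.succ).charpoly := by
  obtain ⟨h1, h2⟩ := good_charmatrix hN
  rw [Matrix.charpoly, good_det h1, h2, charmatrix_apply_eq, Matrix.charpoly]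

end Good

section Conj
variable {R : Type*} [CommRing R] {n : Type*} [Fintype n] [DecidableEq n]
variable (P M : Matrix n n R) [Invertible P]

lemma myconj_pow (m : ℕ) : (⅟P * M * P) ^ m = ⅟P * M ^ m * P := by
  induction m with
  | zero => simp [invOf_mul_self]
  | succ m ih =>
      rw [pow_succ, ih, pow_succ]
      calc ⅟P * M ^ m * P * (⅟P * M * P)
          = ⅟P * M ^ m * (P * ⅟P) * (M * P) := by
            simp only [Matrix.mul_assoc]
        _ = ⅟P * (M ^ m * M) * P := by
            rw [mul_invOf_self]
            simp only [Matrix.mul_assoc, Matrix.one_mul]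

lemma mytrace_conj : (⅟P * M * P).trace = M.trace := by
  rw [Matrix.trace_mul_comm, ← Matrix.mul_assoc, mul_invOf_self, Matrix.one_mul]

lemma mycharpoly_conj : (⅟P * M * P).charpoly = M.charpoly := by
  have key : charmatrix (⅟P * M * P) =
      (Polynomial.C : R →+* Polynomial R).mapMatrix ⅟P * charmatrix M * (Polynomial.C : R →+* Polynomial R).mapMatrix P := by
    rw [charmatrix, charmatrix, Matrix.mul_sub, Matrix.sub_mul]
    congr 1
    · rw [(Matrix.scalar_commute (Polynomial.X : Polynomial R) (fun r => Commute.all _ _)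
        ((Polynomial.C : R →+* Polynomial R).mapMatrix ⅟P)).symm.eq]
      rw [Matrix.mul_assoc, ← _root_.map_mul, invOf_mul_self, _root_.map_one, Matrix.mul_one]
    · rw [← _root_.map_mul, ← _root_.map_mul]
  rw [Matrix.charpoly, key, Matrix.det_mul, Matrix.det_mul, Matrix.charpoly]
  rw [mul_comm ((Polynomial.C : R →+* Polynomial R).mapMatrix ⅟P).det _, mul_assoc, ← Matrix.det_mul,
    ← RingHom.map_mul, invOf_mul_self]
  simp

end Conj

section Eig

lemma exists_eigen {k : ℕ} (M : Matrix (Fin (k+1)) (Fin (k+1)) ℂ) :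
    ∃ (lam : ℂ) (v : Fin (k+1) → ℂ), v ≠ 0 ∧ M.mulVec v = lam • v := by
  have hdeg : 0 < M.charpoly.degree := by
    rw [Matrix.charpoly_degree_eq_dim]
    simp only [Fintype.card_fin]
    exact_mod_cast Nat.succ_pos k
  obtain ⟨lam, hlam⟩ := Complex.exists_root hdeg
  have h1 : ((lam • 1 - M : Matrix (Fin (k+1)) (Fin (k+1)) ℂ)).det = 0 := by
    have h0 := RingHom.map_det (Polynomial.evalRingHom lam) (charmatrix M)
    have h2 : (Polynomial.evalRingHom lam).mapMatrix (charmatrix M) = lam • 1 - M := by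
      ext i j
      rw [RingHom.mapMatrix_apply]
      by_cases h : i = j
      · subst h; simp [charmatrix_apply_eq, Matrix.one_apply]
      · simp [charmatrix_apply_ne _ _ _ h, Matrix.one_apply, h]
    rw [h2] at h0
    rw [← h0, ← Matrix.charpoly]
    exact hlam
  obtain ⟨v, hv, hv2⟩ := (Matrix.exists_mulVec_eq_zero_iff).2 h1
  refine ⟨lam, v, hv, ?_⟩
  rw [Matrix.sub_mulVec, Matrix.smul_mulVec, Matrix.one_mulVec, sub_eq_zero] at hv2
  exact hv2.symm

end Eig

-- build an invertible P whose 0-th column is v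
lemma exists_P {k : ℕ} (v : Fin (k+1) → ℂ) (hv : v ≠ 0) :
    ∃ P : Matrix (Fin (k+1)) (Fin (k+1)) ℂ, IsUnit P.det ∧ (∀ i, P i 0 = v i) := by
  obtain ⟨i0, hi0⟩ : ∃ i, v i ≠ 0 := by
    by_contra h
    push_neg at h
    exact hv (funext h)
  set Q : Matrix (Fin (k+1)) (Fin (k+1)) ℂ := (1 : Matrix _ _ ℂ).updateCol i0 v with hQ
  have hdetQ : Q.det = v i0 := by
    rw [hQ, ← Matrix.cramer_apply, Matrix.cramer_one]
    rfl
  refine ⟨Q.submatrix id (Equiv.swap 0 i0), ?_, fun i => ?_⟩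
  · rw [Matrix.det_permute' (Equiv.swap 0 i0) Q, hdetQ]
    exact (IsUnit.mul_iff.2 ⟨(Equiv.Perm.sign _).isUnit.map (Int.castRingHom ℂ), hi0.isUnit⟩)
  · simp only [Matrix.submatrix_apply, id_eq, Equiv.swap_apply_left]
    rw [hQ, Matrix.updateCol_self]

lemma my_roots_card {k : ℕ} (M : Matrix (Fin k) (Fin k) ℂ) :
    Multiset.card M.charpoly.roots = k := by
  rw [(Polynomial.splits_iff_card_roots).1 (IsAlgClosed.splits M.charpoly),
    Matrix.charpoly_natDegree_eq_dim, Fintype.card_fin]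

lemma trace_pow_eq_sum_pow_roots (k : ℕ) : ∀ (M : Matrix (Fin k) (Fin k) ℂ) (m : ℕ),
    (M ^ m).trace = ((M.charpoly.roots).map (· ^ m)).sum := by
  induction k with
  | zero =>
      intro M m
      have h2 : M.charpoly = 1 := by rw [Matrix.charpoly, Matrix.det_fin_zero]
      rw [h2]
      simp [Matrix.trace]
  | succ k ih =>
      intro M m
      obtain ⟨lam, v, hv, hMv⟩ := exists_eigen M
      obtain ⟨P, hP, hPv⟩ := exists_P v hv
      have : Invertible P := P.invertibleOfIsUnitDet hP
      set N := ⅟P * M * P with hN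
      have hMP : ∀ i, (M * P) i 0 = lam * v i := by
        intro i
        have h1 : (M * P) i 0 = M.mulVec v i := by
          simp [Matrix.mul_apply, Matrix.mulVec, dotProduct, hPv]
        rw [h1, hMv]
        rfl
      have hNcol : ∀ i, N i 0 = lam * (1 : Matrix (Fin (k+1)) (Fin (k+1)) ℂ) i 0 := by
        intro i
        have h1 : N i 0 = ∑ j, (⅟P) i j * (M * P) j 0 := by
          rw [hN, Matrix.mul_assoc, Matrix.mul_apply]
        rw [h1]
        have h2 : ∀ j, (⅟P) i j * (M * P) j 0 = lam * ((⅟P) i j * P j 0) := by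
          intro j; rw [hMP, hPv]; ring
        simp only [h2, ← Finset.mul_sum]
        congr 1
        rw [← Matrix.mul_apply, invOf_mul_self]
      have hgood : ∀ i, i ≠ 0 → N i 0 = 0 := by
        intro i hi
        rw [hNcol, Matrix.one_apply_ne hi, mul_zero]
      have hN00 : N 0 0 = lam := by rw [hNcol, Matrix.one_apply_eq, mul_one]
      obtain ⟨p1, p2, p3⟩ := good_pow hgood m
      have htr : (M ^ m).trace = lam ^ m + ((N.submatrix Fin.succ Fin.succ) ^ m).trace := by
        have : (N ^ m).trace = (M ^ m).trace := by
          rw [hN, myconj_pow, mytrace_conj]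
        rw [← this, good_trace (N ^ m), p2, hN00, p3]
      have hcp : M.charpoly = (Polynomial.X - Polynomial.C lam) * (N.submatrix Fin.succ Fin.succ).charpoly := by
        rw [← mycharpoly_conj P M, ← hN, good_charpoly hgood, hN00]
      have hq : (N.submatrix Fin.succ Fin.succ).charpoly ≠ 0 :=
        (Matrix.charpoly_monic _).ne_zero
      have hroots : M.charpoly.roots =
          lam ::ₘ (N.submatrix Fin.succ Fin.succ).charpoly.roots := by
        rw [hcp, Polynomial.roots_mul (mul_ne_zero (Polynomial.X_sub_C_ne_zero lam) hq),
          Polynomial.roots_X_sub_C]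
        rfl
      rw [htr, hroots, ih, Multiset.map_cons, Multiset.sum_cons]

noncomputable def nE {A : Type*} [CommRing A] [Algebra ℂ A] (p : ℕ → A) : ℕ → A
  | 0 => 1
  | (m+1) => algebraMap ℂ A (((m : ℂ)+1))⁻¹ *
      ((-1)^(m+2) * ∑ i ∈ (Finset.range (m+1)).attach,
        (-1)^(i : ℕ) * nE p i * p (m+1-(i : ℕ)))
  decreasing_by exact Finset.mem_range.mp i.2

lemma nE_map {A B : Type*} [CommRing A] [Algebra ℂ A] [CommRing B] [Algebra ℂ B]
    (φ : A →ₐ[ℂ] B) (p : ℕ → A) (m : ℕ) :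
    φ (nE p m) = nE (fun i => φ (p i)) m := by
  induction m using Nat.strong_induction_on with
  | _ m ih =>
    match m with
    | 0 => simp [nE]
    | (m+1) =>
      rw [nE, nE]
      rw [_root_.map_mul, _root_.map_mul, map_sum, map_pow, map_neg, _root_.map_one, AlgHom.commutes]
      congr 1
      congr 1
      refine Finset.sum_congr rfl fun i _ => ?_
      rw [_root_.map_mul, _root_.map_mul, map_pow, map_neg, _root_.map_one, ih i (Finset.mem_range.mp i.2)]

lemma nE_mem {A : Type*} [CommRing A] [Algebra ℂ A] (T : Subalgebra ℂ A)
    (p : ℕ → A) (m : ℕ) (h : ∀ i, 1 ≤ i → i ≤ m → p i ∈ T) : nE p m ∈ T := by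
  induction m using Nat.strong_induction_on with
  | _ m ih =>
    match m with
    | 0 => rw [nE]; exact T.one_mem
    | (m+1) =>
      rw [nE]
      refine T.mul_mem (T.algebraMap_mem _) (T.mul_mem (T.pow_mem (T.neg_mem T.one_mem) _) ?_)
      refine T.sum_mem fun i _ => ?_
      have hi := Finset.mem_range.mp i.2
      refine T.mul_mem (T.mul_mem (T.pow_mem (T.neg_mem T.one_mem) _) ?_) ?_
      · exact ih i hi fun j h1 h2 => h j h1 (h2.trans hi.le)
      · exact h _ (by omega) (by omega)

lemma sum_antidiagonal_filter {M : Type*} [AddCommMonoid M] (m : ℕ) (g : ℕ → ℕ → M) :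
    ∑ a ∈ (Finset.HasAntidiagonal.antidiagonal (m+1)).filter (fun a => a.1 < m+1), g a.1 a.2
      = ∑ i ∈ Finset.range (m+1), g i (m+1-i) := by
  rw [Finset.sum_filter, Finset.Nat.sum_antidiagonal_eq_sum_range_succ_mk]
  rw [Finset.sum_range_succ]
  simp only [lt_self_iff_false, if_false, add_zero]
  exact Finset.sum_congr rfl fun i hi => by
    rw [if_pos (Finset.mem_range.mp hi)]

lemma nE_esymm (s : Multiset ℂ) (m : ℕ) :
    nE (fun i => (s.map (· ^ i)).sum) m = s.esymm m := by
  set l := s.toList with hldef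
  have hl : l.length = Multiset.card s := Multiset.length_toList s
  set f : Fin (Multiset.card s) → ℂ := fun i => l.get (Fin.cast hl.symm i) with hf
  have hs : Finset.univ.val.map f = s := by
    rw [Fin.univ_val_map]
    have : List.ofFn f = l := by
      apply List.ext_getElem
      · simp [List.length_ofFn, hl]
      · intro i h1 h2
        simp [hf, List.getElem_ofFn]
    rw [this, hldef, Multiset.coe_toList]
  have hpsum : ∀ j : ℕ, MvPolynomial.aeval f (MvPolynomial.psum (Fin (Multiset.card s)) ℂ j)
      = (s.map (· ^ j)).sum := by
    intro j
    rw [MvPolynomial.psum, map_sum]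
    simp only [map_pow, MvPolynomial.aeval_X]
    conv_rhs => rw [← hs]
    rw [Multiset.map_map]
    rfl
  have hesymm : ∀ j : ℕ, MvPolynomial.aeval f (MvPolynomial.esymm (Fin (Multiset.card s)) ℂ j)
      = s.esymm j := by
    intro j
    rw [MvPolynomial.aeval_esymm_eq_multiset_esymm, hs]
  induction m using Nat.strong_induction_on with
  | _ m ih =>
    match m with
    | 0 =>
        rw [nE]
        simp [Multiset.esymm, Multiset.powersetCard_zero_left]
    | (m+1) =>
      have key := congrArg (MvPolynomial.aeval f)
        (MvPolynomial.mul_esymm_eq_sum (Fin (Multiset.card s)) ℂ (m+1))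
      rw [_root_.map_mul, _root_.map_mul, map_natCast, map_pow, map_neg, _root_.map_one,
        map_sum] at key
      simp only [_root_.map_mul, map_pow, map_neg, _root_.map_one, hesymm, hpsum] at key
      push_cast at key
      simp only [show m+1+1 = m+2 from by omega] at key
      rw [sum_antidiagonal_filter m
        (fun i j => (-1:ℂ)^i * s.esymm i * (s.map (· ^ j)).sum)] at key
      rw [nE]
      rw [Finset.sum_attach (Finset.range (m+1))
        (fun i => (-1:ℂ)^i * nE (fun i => (s.map (· ^ i)).sum) i * (s.map (· ^ (m+1-i))).sum)]
      have hne : ((m : ℂ) + 1) ≠ 0 := by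
        exact Nat.cast_add_one_ne_zero m
      rw [show (algebraMap ℂ ℂ) ((m : ℂ)+1)⁻¹ = ((m : ℂ)+1)⁻¹ from rfl]
      rw [Finset.sum_congr rfl fun i hi => by
        rw [ih i (Finset.mem_range.mp hi)]]
      rw [← key, inv_mul_cancel_left₀ hne]

-- ===== generic matrices =====

lemma my_trace_map {n : Type*} [Fintype n] {R S : Type*} [CommRing R] [CommRing S]
    (A : Matrix n n R) (φ : R →+* S) : φ A.trace = (A.map φ).trace := by
  simp [Matrix.trace, Matrix.diag, map_sum]

lemma eval_eq_aeval {n : ℕ} (x : (Fin n × Fin n) ⊕ (Fin n × Fin n) → ℂ) (q : PolyFun n) :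
    MvPolynomial.eval x q = MvPolynomial.aeval x q := by
  rw [MvPolynomial.aeval_def, Algebra.algebraMap_self]
  rfl

lemma generic_charpoly_coeff {n : ℕ} (W : Matrix (Fin n) (Fin n) (PolyFun n))
    (p : ℕ → PolyFun n)
    (hp : ∀ (x : (Fin n × Fin n) ⊕ (Fin n × Fin n) → ℂ) (i : ℕ),
      MvPolynomial.eval x (p i) = ((W.map (MvPolynomial.eval x)) ^ i).trace)
    (m : ℕ) (hm : m ≤ n) :
    W.charpoly.coeff (n - m) = (-1)^m * nE p m := by
  apply MvPolynomial.funext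
  intro x
  set φ := (MvPolynomial.eval x : PolyFun n →+* ℂ) with hφ
  set Mx := W.map φ with hMx
  have hLHS : φ (W.charpoly.coeff (n - m)) = Mx.charpoly.coeff (n - m) := by
    rw [hMx, Matrix.charpoly_map, Polynomial.coeff_map]
  have hs : Multiset.card Mx.charpoly.roots = n := my_roots_card Mx
  have hdeg : Mx.charpoly.natDegree = n := by
    rw [Matrix.charpoly_natDegree_eq_dim, Fintype.card_fin]
  have hcoeff : Mx.charpoly.coeff (n - m) = (-1)^m * Mx.charpoly.roots.esymm m := by
    rw [Polynomial.coeff_eq_esymm_roots_of_splits (IsAlgClosed.splits _)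
      (by rw [hdeg]; omega)]
    rw [(Matrix.charpoly_monic Mx).leadingCoeff, hdeg, Nat.sub_sub_self hm, one_mul]
  have hpfun : (fun i => φ (p i)) = fun i => ((Mx.charpoly.roots).map (· ^ i)).sum := by
    funext i
    rw [hφ, hp x i, ← trace_pow_eq_sum_pow_roots n Mx i]
  have hRHS : φ ((-1)^m * nE p m) = (-1)^m * Mx.charpoly.roots.esymm m := by
    rw [_root_.map_mul, map_pow, map_neg, _root_.map_one]
    congr 1
    have : φ (nE p m) = nE (fun i => φ (p i)) m := by
      have h2 : ∀ q, φ q = (MvPolynomial.aeval x : PolyFun n →ₐ[ℂ] ℂ) q :=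
        fun q => eval_eq_aeval x q
      calc φ (nE p m) = (MvPolynomial.aeval x) (nE p m) := h2 _
        _ = nE (fun i => (MvPolynomial.aeval x) (p i)) m :=
            nE_map (MvPolynomial.aeval x : PolyFun n →ₐ[ℂ] ℂ) p m
        _ = nE (fun i => φ (p i)) m := by
            congr 1
    rw [this, hpfun, nE_esymm]
  rw [hLHS, hRHS, hcoeff]

lemma ch_expand {n : ℕ} {R : Type*} [CommRing R] [Nontrivial R]
    (W : Matrix (Fin n) (Fin n) R) :
    W ^ n = -∑ i ∈ Finset.range n, (W.charpoly.coeff i) • W ^ i := by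
  have h := W.aeval_self_charpoly
  rw [Polynomial.aeval_eq_sum_range] at h
  have hdeg : W.charpoly.natDegree = n := by
    rw [Matrix.charpoly_natDegree_eq_dim, Fintype.card_fin]
  have hc : W.charpoly.coeff n = 1 := by
    have h1 := (Matrix.charpoly_monic W).coeff_natDegree
    rwa [hdeg] at h1
  rw [hdeg, Finset.sum_range_succ, hc, one_smul] at h
  exact eq_neg_of_add_eq_zero_right h


lemma eval_trXY {n : ℕ} (x : (Fin n × Fin n) ⊕ (Fin n × Fin n) → ℂ) (a b : ℕ) :
    MvPolynomial.eval x (trXY n a b) =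
      (((Xmat n).map (MvPolynomial.eval x)) ^ a *
        ((Ymat n).map (MvPolynomial.eval x)) ^ b).trace := by
  rw [trXY, my_trace_map _ (MvPolynomial.eval x : PolyFun n →+* ℂ)]
  congr 1
  have h1 : ∀ A : Matrix (Fin n) (Fin n) (PolyFun n),
      A.map (MvPolynomial.eval x) =
        (RingHom.mapMatrix (MvPolynomial.eval x : PolyFun n →+* ℂ)) A := fun A => rfl
  rw [h1, h1, h1, _root_.map_mul, map_pow, map_pow]

lemma hpX (n : ℕ) : ∀ (x : (Fin n × Fin n) ⊕ (Fin n × Fin n) → ℂ) (i : ℕ),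
    MvPolynomial.eval x (trXY n i 0) = (((Xmat n).map (MvPolynomial.eval x)) ^ i).trace := by
  intro x i
  rw [eval_trXY, pow_zero, Matrix.mul_one]

lemma hpY (n : ℕ) : ∀ (x : (Fin n × Fin n) ⊕ (Fin n × Fin n) → ℂ) (i : ℕ),
    MvPolynomial.eval x (trXY n 0 i) = (((Ymat n).map (MvPolynomial.eval x)) ^ i).trace := by
  intro x i
  rw [eval_trXY, pow_zero, Matrix.one_mul]

lemma trXY_left_reduce (n d k : ℕ) :
    trXY n (d + n) k = -∑ i ∈ Finset.range n, (Xmat n).charpoly.coeff i * trXY n (d + i) k := by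
  have hXn := ch_expand (Xmat n)
  rw [trXY, pow_add, hXn]
  rw [Matrix.mul_neg, Matrix.neg_mul, Matrix.trace_neg]
  rw [Finset.mul_sum, Finset.sum_mul, Matrix.trace_sum]
  congr 1
  refine Finset.sum_congr rfl fun i _ => ?_
  rw [mul_smul_comm, smul_mul_assoc, Matrix.trace_smul, smul_eq_mul, trXY, pow_add]

lemma trXY_right_reduce (n j e : ℕ) :
    trXY n j (e + n) = -∑ i ∈ Finset.range n, (Ymat n).charpoly.coeff i * trXY n j (e + i) := by
  have hYn := ch_expand (Ymat n)
  rw [trXY, pow_add, hYn]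
  rw [Matrix.mul_neg, Matrix.mul_neg, Matrix.trace_neg]
  rw [Finset.mul_sum, Finset.mul_sum, Matrix.trace_sum]
  congr 1
  refine Finset.sum_congr rfl fun i _ => ?_
  rw [mul_smul_comm, mul_smul_comm, Matrix.trace_smul, smul_eq_mul, trXY, pow_add]


end CMAux

/-- For all natural numbers `j`, `k`, the polynomial function
`(X,Y) ↦ tr(X^j Y^k)` belongs to the ℂ-subalgebra generated by
`{(X,Y) ↦ tr(X^a Y^b) : 0 ≤ a ≤ n, 0 ≤ b ≤ n}`. -/
theorem stmt_0 (n : ℕ) (hn : 1 ≤ n) (j k : ℕ) :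
    trXY n j k ∈
      Algebra.adjoin ℂ {F : PolyFun n | ∃ a b : ℕ, a ≤ n ∧ b ≤ n ∧ F = trXY n a b} := by
  set T := Algebra.adjoin ℂ {F : PolyFun n | ∃ a b : ℕ, a ≤ n ∧ b ≤ n ∧ F = trXY n a b} with hT
  have hgen : ∀ a b, a ≤ n → b ≤ n → trXY n a b ∈ T := fun a b ha hb =>
    Algebra.subset_adjoin ⟨a, b, ha, hb, rfl⟩
  have hcX : ∀ i, (Xmat n).charpoly.coeff i ∈ T := by
    intro i
    rcases le_or_gt i n with hi | hi
    · have h1 := generic_charpoly_coeff (Xmat n) (fun a => trXY n a 0) (hpX n) (n - i)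
        (by omega)
      rw [Nat.sub_sub_self hi] at h1
      rw [h1]
      exact T.mul_mem (T.pow_mem (T.neg_mem T.one_mem) _)
        (nE_mem T _ _ fun a ha1 ha2 => hgen a 0 (by omega) (Nat.zero_le n))
    · rw [Polynomial.coeff_eq_zero_of_natDegree_lt
        (by rw [Matrix.charpoly_natDegree_eq_dim, Fintype.card_fin]; omega)]
      exact T.zero_mem
  have hcY : ∀ i, (Ymat n).charpoly.coeff i ∈ T := by
    intro i
    rcases le_or_gt i n with hi | hi
    · have h1 := generic_charpoly_coeff (Ymat n) (fun a => trXY n 0 a) (hpY n) (n - i)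
        (by omega)
      rw [Nat.sub_sub_self hi] at h1
      rw [h1]
      exact T.mul_mem (T.pow_mem (T.neg_mem T.one_mem) _)
        (nE_mem T _ _ fun a ha1 ha2 => hgen 0 a (Nat.zero_le n) (by omega))
    · rw [Polynomial.coeff_eq_zero_of_natDegree_lt
        (by rw [Matrix.charpoly_natDegree_eq_dim, Fintype.card_fin]; omega)]
      exact T.zero_mem
  suffices H : ∀ N j k, j + k ≤ N → trXY n j k ∈ T from H (j + k) j k le_rfl
  intro N
  induction N with
  | zero =>
      intro j k h
      obtain ⟨rfl, rfl⟩ : j = 0 ∧ k = 0 := by omega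
      exact hgen 0 0 (Nat.zero_le n) (Nat.zero_le n)
  | succ N ih =>
      intro j k h
      by_cases hj : j ≤ n
      · by_cases hk : k ≤ n
        · exact hgen j k hj hk
        · obtain ⟨e, rfl⟩ : ∃ e, k = e + n := ⟨k - n, by omega⟩
          rw [trXY_right_reduce]
          refine T.neg_mem (T.sum_mem fun i hi => T.mul_mem (hcY i) (ih j (e + i) ?_))
          have := Finset.mem_range.mp hi
          omega
      · obtain ⟨d, rfl⟩ : ∃ d, j = d + n := ⟨j - n, by omega⟩
        rw [trXY_left_reduce]
        refine T.neg_mem (T.sum_mem fun i hi => T.mul_mem (hcX i) (ih (d + i) k ?_))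
        have := Finset.mem_range.mp hi
        omega
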